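/- arXiv:1105.6355 — 3 statements merged into one kernel-verified Lean document; each statement's English description precedes it below -/
import Mathlib

section
/- Let φ(z,·) be, for each z ∈ ℂ, a solution of -u'' + q·u = z·u on (a,b), real-valued for real z, with φ(·,x) and φ'(·,x) entire for each x, and suppose the Wronskian W(φ(ζ,·)*, φ(z,·))(x) → 0 as x ↓ a for all ζ, z ∈ ℂ. Define E(z,c) = φ(z,c) + i·φ'(z,c). Then for all ζ, z ∈ ℂ with ζ* ≠ z, (E(z,c)·E^#(ζ*,c) − E(ζ*,c)·E^#(z,c)) / (2i(ζ* − z)) = ∫_a^c φ(ζ,x)* · φ(z,x) dx. -/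
open Set MeasureTheory Filter

open Topology Complex in
private lemma schwarz_reflect_aux {f : ℂ → ℂ} (hf : Differentiable ℂ f)
    (hr : ∀ t : ℝ, (f t).im = 0) (z : ℂ) :
    (starRingEnd ℂ) (f ((starRingEnd ℂ) z)) = f z := by
  set g : ℂ → ℂ := fun w => (starRingEnd ℂ) (f ((starRingEnd ℂ) w)) with hg
  have hgdiff : Differentiable ℂ g := by
    intro w
    have hd := (hf ((starRingEnd ℂ) w)).hasDerivAt
    have hgd : HasDerivAt g ((starRingEnd ℂ) (deriv f ((starRingEnd ℂ) w))) w := by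
      rw [hasDerivAt_iff_tendsto_slope] at hd ⊢
      have h1 : Tendsto (fun u : ℂ => (starRingEnd ℂ) u) (𝓝[≠] w)
          (𝓝[≠] ((starRingEnd ℂ) w)) := by
        apply tendsto_nhdsWithin_of_tendsto_nhds_of_eventually_within
        · exact tendsto_nhdsWithin_of_tendsto_nhds (Complex.continuous_conj.tendsto w)
        · filter_upwards [self_mem_nhdsWithin] with u hu
          simp only [mem_compl_iff, mem_singleton_iff] at hu ⊢
          intro h
          exact hu (by simpa using congrArg (starRingEnd ℂ) h)
      have h2 := (Complex.continuous_conj.tendsto _).comp (hd.comp h1)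
      refine h2.congr fun u => ?_
      simp only [Function.comp_apply, slope_def_field, hg]
      rw [map_div₀, map_sub, map_sub]
      simp
    exact hgd.differentiableAt
  have hfa : AnalyticOnNhd ℂ f univ :=
    hf.differentiableOn.analyticOnNhd isOpen_univ
  have hga : AnalyticOnNhd ℂ g univ :=
    hgdiff.differentiableOn.analyticOnNhd isOpen_univ
  have hreal : ∀ t : ℝ, g t = f t := by
    intro t
    simp only [hg]
    rw [Complex.conj_ofReal, Complex.conj_eq_iff_im]
    exact hr t
  have hseq : Tendsto (fun n : ℕ => ((1 / (n + 1) : ℝ) : ℂ)) atTop (𝓝[≠] (0 : ℂ)) := by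
    apply tendsto_nhdsWithin_of_tendsto_nhds_of_eventually_within
    · have h0 : Tendsto (fun n : ℕ => (1 / (n + 1) : ℝ)) atTop (𝓝 0) :=
        tendsto_one_div_add_atTop_nhds_zero_nat
      have h := (Complex.continuous_ofReal.tendsto 0).comp h0
      simp only [Complex.ofReal_zero] at h
      exact h
    · filter_upwards with n
      simp only [mem_compl_iff, mem_singleton_iff]
      intro h
      have h1 : (1 / (n + 1) : ℝ) = 0 := by exact_mod_cast h
      have h2 : (0:ℝ) < 1 / (n + 1) := by positivity
      linarith
  have hfreq : ∃ᶠ w in 𝓝[≠] (0 : ℂ), g w = f w :=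
    hseq.frequently (Frequently.of_forall fun n => hreal _)
  have := hga.eqOn_of_preconnected_of_frequently_eq hfa isPreconnected_univ (mem_univ 0) hfreq
  exact this (mem_univ z)

/-- Lagrange identity / reproducing kernel formula for `E(z,c) = φ(z,c) + i φ'(z,c)`. -/
theorem stmt_4 (a b c : ℝ) (hc : c ∈ Ioo a b) (q : ℝ → ℝ)
    (hq : LocallyIntegrableOn q (Ioo a b))
    (φ φ' : ℂ → ℝ → ℂ)
    (hder : ∀ (z : ℂ), ∀ x ∈ Ioo a b, HasDerivAt (φ z) (φ' z x) x)
    (hode : ∀ (z : ℂ), ∀ x ∈ Ioo a b, HasDerivAt (φ' z) (((q x : ℂ) - z) * φ z x) x)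
    (hreal : ∀ (lam : ℝ) (x : ℝ), (φ (lam : ℂ) x).im = 0 ∧ (φ' (lam : ℂ) x).im = 0)
    (hent : ∀ x ∈ Ioo a b, Differentiable ℂ (fun z => φ z x) ∧
      Differentiable ℂ (fun z => φ' z x))
    (hL2 : ∀ (ζ z : ℂ), IntegrableOn (fun x => (starRingEnd ℂ) (φ ζ x) * φ z x) (Ioo a c))
    (hwron : ∀ (ζ z : ℂ),
      Tendsto (fun x => (starRingEnd ℂ) (φ ζ x) * φ' z x - (starRingEnd ℂ) (φ' ζ x) * φ z x)
        (nhdsWithin a (Ioi a)) (nhds 0))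
    (E : ℂ → ℝ → ℂ) (hEdef : ∀ (z : ℂ) (x : ℝ), E z x = φ z x + Complex.I * φ' z x) :
    ∀ (ζ z : ℂ), (starRingEnd ℂ) ζ ≠ z →
      (E z c * (starRingEnd ℂ) (E ζ c) -
          E ((starRingEnd ℂ) ζ) c * (starRingEnd ℂ) (E ((starRingEnd ℂ) z) c)) /
        (2 * Complex.I * ((starRingEnd ℂ) ζ - z)) =
      ∫ x in Ioo a c, (starRingEnd ℂ) (φ ζ x) * φ z x := by
  intro ζ z hne
  obtain ⟨hab, hcb⟩ := hc
  -- reflection at c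
  have hreflφ : ∀ w : ℂ, φ ((starRingEnd ℂ) w) c = (starRingEnd ℂ) (φ w c) := by
    intro w
    have := schwarz_reflect_aux (f := fun w => φ w c) (hent c ⟨hab, hcb⟩).1
      (fun t => (hreal t c).1) ((starRingEnd ℂ) w)
    simpa using this.symm
  have hreflφ' : ∀ w : ℂ, φ' ((starRingEnd ℂ) w) c = (starRingEnd ℂ) (φ' w c) := by
    intro w
    have := schwarz_reflect_aux (f := fun w => φ' w c) (hent c ⟨hab, hcb⟩).2
      (fun t => (hreal t c).2) ((starRingEnd ℂ) w)
    simpa using this.symm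
  -- the Wronskian
  set W : ℝ → ℂ := fun x =>
    (starRingEnd ℂ) (φ ζ x) * φ' z x - (starRingEnd ℂ) (φ' ζ x) * φ z x with hW
  set g : ℝ → ℂ := fun x =>
    ((starRingEnd ℂ) ζ - z) * ((starRingEnd ℂ) (φ ζ x) * φ z x) with hgdef
  have hWder : ∀ x ∈ Ioo a b, HasDerivAt W (g x) x := by
    intro x hx
    have h1 : HasDerivAt (fun t => (starRingEnd ℂ) (φ ζ t))
        ((starRingEnd ℂ) (φ' ζ x)) x := (hder ζ x hx).star
    have h2 : HasDerivAt (fun t => (starRingEnd ℂ) (φ' ζ t))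
        ((starRingEnd ℂ) (((q x : ℂ) - ζ) * φ ζ x)) x := (hode ζ x hx).star
    have := (h1.mul (hode z x hx)).sub (h2.mul (hder z x hx))
    refine this.congr_deriv ?_
    simp only [hgdef, map_mul, map_sub, Complex.conj_ofReal]
    ring
  -- continuity of g on Ioo a b
  have hgcont : ∀ x ∈ Ioo a b, ContinuousAt g x := by
    intro x hx
    have c1 : ContinuousAt (fun t => (starRingEnd ℂ) (φ ζ t)) x :=
      Complex.continuous_conj.continuousAt.comp (hder ζ x hx).continuousAt
    have c2 : ContinuousAt (φ z) x := (hder z x hx).continuousAt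
    exact continuousAt_const.mul (c1.mul c2)
  -- FTC on [x, c] for x ∈ Ioo a c
  have hFTC : ∀ x ∈ Ioo a c, W c - W x = ∫ t in Set.Ioc x c, g t := by
    intro x hx
    have hsub : Set.uIcc x c ⊆ Ioo a b := by
      rw [Set.uIcc_of_le hx.2.le]
      intro t ht
      exact ⟨lt_of_lt_of_le hx.1 ht.1, lt_of_le_of_lt ht.2 hcb⟩
    have hint : IntervalIntegrable g MeasureTheory.volume x c := by
      apply ContinuousOn.intervalIntegrable
      intro t ht
      exact (hgcont t (hsub ht)).continuousWithinAt
    have := intervalIntegral.integral_eq_sub_of_hasDerivAt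
      (fun t ht => hWder t (hsub ht)) hint
    rw [intervalIntegral.integral_of_le hx.2.le] at this
    rw [← this]
  -- integrability of g on Ioo a c
  have hgint : IntegrableOn g (Ioo a c) := (hL2 ζ z).const_mul _
  -- limit of W x as x → a+
  have hlim1 : Tendsto (fun x => W c - W x) (nhdsWithin a (Ioi a)) (nhds (W c - 0)) :=
    tendsto_const_nhds.sub (hwron ζ z)
  -- limit of set integrals
  have hcover : AECover (MeasureTheory.volume.restrict (Ioo a c)) (nhdsWithin a (Ioi a))
      (fun x : ℝ => Set.Ioc x c) :=
    MeasureTheory.aecover_Ioo_of_Ioc (tendsto_id.mono_left nhdsWithin_le_nhds)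
      tendsto_const_nhds
  have hlim2 := hcover.integral_tendsto_of_countably_generated hgint
  have hmemIoo : Ioo a c ∈ nhdsWithin a (Ioi a) :=
    Ioo_mem_nhdsGT_of_mem ⟨le_refl a, hab⟩
  have hlim2' : Tendsto (fun x => W c - W x) (nhdsWithin a (Ioi a))
      (nhds (∫ t in Ioo a c, g t)) := by
    refine hlim2.congr' ?_
    filter_upwards [hmemIoo] with x hx
    rw [MeasureTheory.Measure.restrict_restrict measurableSet_Ioc]
    have hset : Set.Ioc x c ∩ Set.Ioo a c = Set.Ioo x c := by
      ext t
      constructor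
      · rintro ⟨⟨h1, h2⟩, ⟨h3, h4⟩⟩
        exact ⟨h1, h4⟩
      · rintro ⟨h1, h2⟩
        exact ⟨⟨h1, h2.le⟩, ⟨hx.1.trans h1, h2⟩⟩
    rw [hset, ← MeasureTheory.integral_Ioc_eq_integral_Ioo, ← hFTC x hx]
  have hkey : W c = ∫ t in Ioo a c, g t := by
    have := tendsto_nhds_unique hlim2' hlim1
    simpa using this.symm
  have hkey2 : ((starRingEnd ℂ) ζ - z) * (∫ x in Ioo a c, (starRingEnd ℂ) (φ ζ x) * φ z x)
      = W c := by
    rw [hkey, hgdef]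
    exact (MeasureTheory.integral_const_mul _ _).symm
  -- final algebra
  have hne2 : (2 : ℂ) * Complex.I * ((starRingEnd ℂ) ζ - z) ≠ 0 := by
    apply mul_ne_zero
    · simp [Complex.I_ne_zero]
    · exact sub_ne_zero.mpr hne
  rw [div_eq_iff hne2, hEdef, hEdef, hEdef, hEdef, hreflφ ζ, hreflφ' ζ, hreflφ z, hreflφ' z]
  simp only [map_add, map_mul, Complex.conj_I, Complex.conj_conj]
  have hWc : W c = (starRingEnd ℂ) (φ ζ c) * φ' z c - (starRingEnd ℂ) (φ' ζ c) * φ z c := rfl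
  rw [hWc] at hkey2
  linear_combination (-2 * Complex.I) * hkey2
end

section
/- Let (B(c))_{c ∈ (a,b)} be a family of closed subspaces of a Hilbert space H such that B(c₁) ⊆ B(c₂) whenever c₁ < c₂, with ∪_{c} B(c) dense in H and ∩_{x > c} B(x) = B(c) = closure(∪_{x < c} B(x)) for each c. Suppose B' is another closed subspace such that for every c, either B' ⊆ B(c) or B(c) ⊆ B', and suppose B' ≠ {0} and B' is not dense in H, and K is a family of vectors witnessing that ∩_c B(c) = {0} in the sense that sup norms of evaluations tend to 0. Then the set {c : B' ⊆ B(c)} has an infimum c₀ ∈ (a,b) and B' = B(c₀). -/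
open Set

/-- For a strictly increasing, two-sided continuous chain of closed subspaces `B c`,
`c ∈ (a,b)`, with dense union and trivial intersection, any nontrivial, non-dense closed
subspace `B'` comparable to every member of the chain equals `B c₀`, where `c₀ ∈ (a,b)` is
the infimum of `{c : B' ≤ B c}`. -/
theorem stmt_9 {H : Type*} [NormedAddCommGroup H] [InnerProductSpace ℂ H] [CompleteSpace H]
    (a b : ℝ) (hab : a < b) (B : ℝ → Submodule ℂ H)
    (hclosed : ∀ c ∈ Ioo a b, IsClosed (B c : Set H))
    (hmono : ∀ c₁ ∈ Ioo a b, ∀ c₂ ∈ Ioo a b, c₁ < c₂ → B c₁ < B c₂)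
    (hdense : (⨆ c ∈ Ioo a b, B c).topologicalClosure = ⊤)
    (hcontR : ∀ c ∈ Ioo a b, (⨅ x ∈ Ioo c b, B x) = B c)
    (hcontL : ∀ c ∈ Ioo a b, (⨆ x ∈ Ioo a c, B x).topologicalClosure = B c)
    (hinf : (⨅ c ∈ Ioo a b, B c) = ⊥)
    (B' : Submodule ℂ H) (hB'closed : IsClosed (B' : Set H))
    (hcomp : ∀ c ∈ Ioo a b, B' ≤ B c ∨ B c ≤ B')
    (hB'ne : B' ≠ ⊥) (hB'nd : B'.topologicalClosure ≠ ⊤) :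
    ∃ c₀ ∈ Ioo a b, IsGLB {c ∈ Ioo a b | B' ≤ B c} c₀ ∧ B' = B c₀ := by
  have hBcl : B'.topologicalClosure = B' := hB'closed.submodule_topologicalClosure_eq
  set S : Set ℝ := {c ∈ Ioo a b | B' ≤ B c} with hS
  -- S is nonempty
  have hSne : S.Nonempty := by
    by_contra h
    rw [Set.not_nonempty_iff_eq_empty] at h
    apply hB'nd
    rw [hBcl, eq_top_iff, ← hdense]
    apply Submodule.topologicalClosure_minimal _ _ hB'closed
    apply iSup₂_le
    intro c hc
    rcases hcomp c hc with h1 | h1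
    · exact (Set.eq_empty_iff_forall_notMem.mp h c ⟨hc, h1⟩).elim
    · exact h1
  -- a lower bound c₁ ∈ Ioo a b with ¬ B' ≤ B c₁
  obtain ⟨c₁, hc₁, hc₁n⟩ : ∃ c₁ ∈ Ioo a b, ¬ B' ≤ B c₁ := by
    by_contra h
    push_neg at h
    apply hB'ne
    rw [eq_bot_iff, ← hinf]
    exact le_iInf₂ h
  have hlb : ∀ s ∈ S, c₁ < s := by
    intro s hs
    by_contra hle
    push_neg at hle
    rcases lt_or_eq_of_le hle with h | h
    · exact hc₁n (hs.2.trans (hmono s hs.1 c₁ hc₁ h).le)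
    · exact hc₁n (h ▸ hs.2)
  have hbdd : BddBelow S := ⟨c₁, fun s hs => (hlb s hs).le⟩
  set c₀ := sInf S with hc₀
  have hglb : IsGLB S c₀ := isGLB_csInf hSne hbdd
  obtain ⟨s₀, hs₀⟩ := hSne
  have hc₀mem : c₀ ∈ Ioo a b := by
    constructor
    · exact lt_of_lt_of_le hc₁.1 (hglb.2 fun s hs => (hlb s hs).le)
    · exact lt_of_le_of_lt (hglb.1 hs₀) hs₀.1.2
  refine ⟨c₀, hc₀mem, hglb, le_antisymm ?_ ?_⟩
  · -- B' ≤ B c₀ via right continuity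
    rw [← hcontR c₀ hc₀mem]
    apply le_iInf₂
    intro x hx
    obtain ⟨s, hsS, hsx⟩ := (isGLB_lt_iff hglb).mp hx.1
    rcases lt_or_eq_of_le hsx.le with h | h
    · exact hsS.2.trans (hmono s hsS.1 x ⟨hc₀mem.1.trans hx.1, hx.2⟩ h).le
    · exact h ▸ hsS.2
  · -- B c₀ ≤ B' via left continuity
    rw [← hcontL c₀ hc₀mem]
    apply Submodule.topologicalClosure_minimal _ _ hB'closed
    apply iSup₂_le
    intro x hx
    have hxI : x ∈ Ioo a b := ⟨hx.1, hx.2.trans hc₀mem.2⟩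
    rcases hcomp x hxI with h1 | h1
    · exact absurd (hglb.1 ⟨hxI, h1⟩) (not_le.mpr hx.2)
    · exact h1
end

section
/- Suppose g : (a₁,b₁) → (a₂,b₂) and for each fixed z in ℂ∖ℝ the identity ∫_{a₁}^{x} |φ₁(z,t)|² dt = ∫_{a₂}^{g(x)} |φ₂(z,t)|² dt holds for all x ∈ (a₁,b₁), where φ₁(z,·), φ₂(z,·) are continuous and nowhere vanishing on their intervals with locally integrable squares integrable near the left endpoints. Then g is continuously differentiable and |φ₁(z,x)|² = g'(x)·|φ₂(z,g(x))|² for all x ∈ (a₁,b₁). -/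
open Set MeasureTheory Filter Topology

private lemma split_aux {a b c y : ℝ} {f : ℝ → ℝ}
    (hc : ContinuousOn f (Ioo a b))
    (hi : IntegrableOn f (Ioo a c))
    (hcab : c ∈ Ioo a b) (hcy : c ≤ y) (hyb : y < b) :
    ∫ t in Ioo a y, f t = (∫ t in Ioo a c, f t) + ∫ t in c..y, f t := by
  have h1 : Ioo a c ∪ Ico c y = Ioo a y := Ioo_union_Ico_eq_Ioo hcab.1 hcy
  have hicy : IntegrableOn f (Ico c y) := by
    have hcc : ContinuousOn f (Icc c y) :=
      hc.mono (fun t ht => ⟨lt_of_lt_of_le hcab.1 ht.1, lt_of_le_of_lt ht.2 hyb⟩)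
    exact hcc.integrableOn_Icc.mono_set Ico_subset_Icc_self
  rw [← h1,
    setIntegral_union (by
      rw [Set.disjoint_left]; rintro t ⟨_, h2⟩ ⟨h3, _⟩; exact absurd h3 (not_le.2 h2))
      measurableSet_Ico hi hicy,
    intervalIntegral.integral_of_le hcy, integral_Ioc_eq_integral_Ioo,
    integral_Ico_eq_integral_Ioo]

private lemma ftc_aux {a b : ℝ} {f : ℝ → ℝ}
    (hc : ContinuousOn f (Ioo a b))
    (hi : ∀ x ∈ Ioo a b, IntegrableOn f (Ioo a x))
    {x : ℝ} (hx : x ∈ Ioo a b) :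
    HasDerivAt (fun u => ∫ t in Ioo a u, f t) (f x) x := by
  set c := (a + x) / 2 with hcdef
  have hac : a < c := by rw [hcdef]; linarith [hx.1]
  have hcx : c < x := by rw [hcdef]; linarith [hx.1]
  have hcmem : c ∈ Ioo a b := ⟨hac, hcx.trans hx.2⟩
  have key : (fun u => ∫ t in Ioo a u, f t)
      =ᶠ[nhds x] (fun u => (∫ t in Ioo a c, f t) + ∫ t in c..u, f t) := by
    filter_upwards [Ioo_mem_nhds hcx hx.2] with y hy
    exact split_aux hc (hi c hcmem) hcmem hy.1.le hy.2
  have h2 : HasDerivAt (fun u => (∫ t in Ioo a c, f t) + ∫ t in c..u, f t) (f x) x := by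
    refine HasDerivAt.const_add _ (intervalIntegral.integral_hasDerivAt_right ?_ ?_ ?_)
    · refine (hc.mono (fun t ht => ?_)).intervalIntegrable
      rw [uIcc_of_le hcx.le] at ht
      exact ⟨lt_of_lt_of_le hac ht.1, lt_of_le_of_lt ht.2 hx.2⟩
    · exact hc.stronglyMeasurableAtFilter isOpen_Ioo x hx
    · exact hc.continuousAt (Ioo_mem_nhds hx.1 hx.2)
  exact h2.congr_of_eventuallyEq key

private lemma mono_aux {a b : ℝ} {f : ℝ → ℝ}
    (hc : ContinuousOn f (Ioo a b))
    (hi : ∀ x ∈ Ioo a b, IntegrableOn f (Ioo a x))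
    (hpos : ∀ x ∈ Ioo a b, 0 < f x) :
    StrictMonoOn (fun u => ∫ t in Ioo a u, f t) (Ioo a b) := by
  intro u hu v hv huv
  have hdecomp := split_aux hc (hi u hu) hu huv.le hv.2
  have hposint : 0 < ∫ t in u..v, f t := by
    apply intervalIntegral.intervalIntegral_pos_of_pos_on
    · refine (hc.mono (fun t ht => ?_)).intervalIntegrable
      rw [uIcc_of_le huv.le] at ht
      exact ⟨lt_of_lt_of_le hu.1 ht.1, lt_of_le_of_lt ht.2 hv.2⟩
    · intro t ht; exact hpos t ⟨hu.1.trans ht.1, ht.2.trans hv.2⟩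
    · exact huv
  simp only []
  rw [hdecomp]
  linarith

/-- If `∫_{a₁}^{x} |φ₁(z,t)|² dt = ∫_{a₂}^{g(x)} |φ₂(z,t)|² dt` for all `x` and all
non-real `z`, then `g` is continuously differentiable with
`|φ₁(z,x)|² = g'(x)·|φ₂(z,g(x))|²`. -/
theorem stmt_11 (a₁ b₁ a₂ b₂ : ℝ) (hab₁ : a₁ < b₁) (hab₂ : a₂ < b₂)
    (g : ℝ → ℝ) (hmap : ∀ x ∈ Ioo a₁ b₁, g x ∈ Ioo a₂ b₂)
    (φ₁ φ₂ : ℂ → ℝ → ℂ)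
    (hcont₁ : ∀ z : ℂ, z.im ≠ 0 → ContinuousOn (φ₁ z) (Ioo a₁ b₁))
    (hcont₂ : ∀ z : ℂ, z.im ≠ 0 → ContinuousOn (φ₂ z) (Ioo a₂ b₂))
    (hne₁ : ∀ z : ℂ, z.im ≠ 0 → ∀ x ∈ Ioo a₁ b₁, φ₁ z x ≠ 0)
    (hne₂ : ∀ z : ℂ, z.im ≠ 0 → ∀ x ∈ Ioo a₂ b₂, φ₂ z x ≠ 0)
    (hint₁ : ∀ z : ℂ, z.im ≠ 0 → ∀ x ∈ Ioo a₁ b₁,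
      IntegrableOn (fun t => ‖φ₁ z t‖ ^ 2) (Ioo a₁ x))
    (hint₂ : ∀ z : ℂ, z.im ≠ 0 → ∀ y ∈ Ioo a₂ b₂,
      IntegrableOn (fun t => ‖φ₂ z t‖ ^ 2) (Ioo a₂ y))
    (hident : ∀ z : ℂ, z.im ≠ 0 → ∀ x ∈ Ioo a₁ b₁,
      ∫ t in Ioo a₁ x, ‖φ₁ z t‖ ^ 2 = ∫ t in Ioo a₂ (g x), ‖φ₂ z t‖ ^ 2) :
    ∃ g' : ℝ → ℝ, ContinuousOn g' (Ioo a₁ b₁) ∧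
      (∀ x ∈ Ioo a₁ b₁, HasDerivAt g (g' x) x) ∧
      ∀ z : ℂ, z.im ≠ 0 → ∀ x ∈ Ioo a₁ b₁,
        ‖φ₁ z x‖ ^ 2 = g' x * ‖φ₂ z (g x)‖ ^ 2 := by
  have hz₀ : (Complex.I).im ≠ 0 := by simp
  set z₀ : ℂ := Complex.I
  -- integrand continuity
  have hic₁ : ∀ z : ℂ, z.im ≠ 0 → ContinuousOn (fun t => ‖φ₁ z t‖ ^ 2) (Ioo a₁ b₁) :=
    fun z hz => ((hcont₁ z hz).norm).pow 2
  have hic₂ : ∀ z : ℂ, z.im ≠ 0 → ContinuousOn (fun t => ‖φ₂ z t‖ ^ 2) (Ioo a₂ b₂) :=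
    fun z hz => ((hcont₂ z hz).norm).pow 2
  -- FTC derivatives
  have hF : ∀ z : ℂ, z.im ≠ 0 → ∀ x ∈ Ioo a₁ b₁,
      HasDerivAt (fun u => ∫ t in Ioo a₁ u, ‖φ₁ z t‖ ^ 2) (‖φ₁ z x‖ ^ 2) x :=
    fun z hz x hx => ftc_aux (hic₁ z hz) (hint₁ z hz) hx
  have hG : ∀ z : ℂ, z.im ≠ 0 → ∀ y ∈ Ioo a₂ b₂,
      HasDerivAt (fun u => ∫ t in Ioo a₂ u, ‖φ₂ z t‖ ^ 2) (‖φ₂ z y‖ ^ 2) y :=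
    fun z hz y hy => ftc_aux (hic₂ z hz) (hint₂ z hz) hy
  have hpos₁ : ∀ z : ℂ, z.im ≠ 0 → ∀ x ∈ Ioo a₁ b₁, 0 < ‖φ₁ z x‖ ^ 2 :=
    fun z hz x hx => pow_pos (norm_pos_iff.2 (hne₁ z hz x hx)) 2
  have hpos₂ : ∀ z : ℂ, z.im ≠ 0 → ∀ y ∈ Ioo a₂ b₂, 0 < ‖φ₂ z y‖ ^ 2 :=
    fun z hz y hy => pow_pos (norm_pos_iff.2 (hne₂ z hz y hy)) 2
  set F₁ : ℝ → ℝ := fun u => ∫ t in Ioo a₁ u, ‖φ₁ z₀ t‖ ^ 2 with hF₁def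
  set F₂ : ℝ → ℝ := fun u => ∫ t in Ioo a₂ u, ‖φ₂ z₀ t‖ ^ 2 with hF₂def
  have hF₁mono : StrictMonoOn F₁ (Ioo a₁ b₁) :=
    mono_aux (hic₁ z₀ hz₀) (hint₁ z₀ hz₀) (hpos₁ z₀ hz₀)
  have hF₂mono : StrictMonoOn F₂ (Ioo a₂ b₂) :=
    mono_aux (hic₂ z₀ hz₀) (hint₂ z₀ hz₀) (hpos₂ z₀ hz₀)
  have hid : ∀ x ∈ Ioo a₁ b₁, F₂ (g x) = F₁ x := fun x hx => (hident z₀ hz₀ x hx).symm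
  -- continuity of g
  have hgc : ∀ x ∈ Ioo a₁ b₁, ContinuousAt g x := by
    intro x hx
    have hgx := hmap x hx
    have hF₁c : ContinuousAt F₁ x := (hF z₀ hz₀ x hx).continuousAt
    rw [ContinuousAt, tendsto_order]
    constructor
    · intro c hc
      set c' := (max c a₂ + g x) / 2 with hc'def
      have h1 : max c a₂ < g x := max_lt hc hgx.1
      have h2 : c' < g x := by rw [hc'def]; linarith
      have h3 : c < c' := by
        have := le_max_left c a₂; rw [hc'def]; linarith
      have h4 : c' ∈ Ioo a₂ b₂ :=
        ⟨by have := le_max_right c a₂; rw [hc'def]; linarith, h2.trans hgx.2⟩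
      have h5 : F₂ c' < F₁ x := hid x hx ▸ hF₂mono h4 hgx h2
      filter_upwards [hF₁c.eventually (eventually_gt_nhds h5),
        Ioo_mem_nhds hx.1 hx.2] with y h6 h7
      have h8 : F₂ c' < F₂ (g y) := by rw [hid y h7]; exact h6
      exact h3.trans ((hF₂mono.lt_iff_lt h4 (hmap y h7)).1 h8)
    · intro c hc
      set c' := (g x + min c b₂) / 2 with hc'def
      have h1 : g x < min c b₂ := lt_min hc hgx.2
      have h2 : g x < c' := by rw [hc'def]; linarith
      have h3 : c' < c := by
        have := min_le_left c b₂; rw [hc'def]; linarith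
      have h4 : c' ∈ Ioo a₂ b₂ :=
        ⟨hgx.1.trans h2, by have := min_le_right c b₂; rw [hc'def]; linarith⟩
      have h5 : F₁ x < F₂ c' := hid x hx ▸ hF₂mono hgx h4 h2
      filter_upwards [hF₁c.eventually (eventually_lt_nhds h5),
        Ioo_mem_nhds hx.1 hx.2] with y h6 h7
      have h8 : F₂ (g y) < F₂ c' := by rw [hid y h7]; exact h6
      exact ((hF₂mono.lt_iff_lt (hmap y h7) h4).1 h8).trans h3
  -- derivative of g
  have hgd : ∀ x ∈ Ioo a₁ b₁,
      HasDerivAt g (‖φ₁ z₀ x‖ ^ 2 / ‖φ₂ z₀ (g x)‖ ^ 2) x := by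
    intro x hx
    have hgx := hmap x hx
    have hd₂ : (0:ℝ) < ‖φ₂ z₀ (g x)‖ ^ 2 := hpos₂ z₀ hz₀ _ hgx
    have hF₁d : HasDerivAt F₁ (‖φ₁ z₀ x‖ ^ 2) x := hF z₀ hz₀ x hx
    have hF₂d : HasDerivAt F₂ (‖φ₂ z₀ (g x)‖ ^ 2) (g x) := hG z₀ hz₀ (g x) hgx
    rw [hasDerivAt_iff_tendsto_slope]
    have hmem : ∀ᶠ y in nhdsWithin x {x}ᶜ, y ∈ Ioo a₁ b₁ :=
      eventually_nhdsWithin_of_eventually_nhds (Ioo_mem_nhds hx.1 hx.2)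
    have hne : ∀ᶠ y in nhdsWithin x {x}ᶜ, y ≠ x := eventually_mem_nhdsWithin
    have hgne : ∀ᶠ y in nhdsWithin x {x}ᶜ, g y ≠ g x := by
      filter_upwards [hmem, hne] with y hy hyx
      intro hgy
      have heq : F₁ y = F₁ x := by rw [← hid y hy, ← hid x hx, hgy]
      exact hyx (hF₁mono.injOn hy hx heq)
    have hgt : Tendsto g (nhdsWithin x {x}ᶜ) (nhdsWithin (g x) {g x}ᶜ) := by
      rw [tendsto_nhdsWithin_iff]
      exact ⟨(hgc x hx).tendsto.mono_left nhdsWithin_le_nhds, hgne⟩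
    have hslope₂ : Tendsto (fun y => slope F₂ (g x) (g y)) (nhdsWithin x {x}ᶜ)
        (nhds (‖φ₂ z₀ (g x)‖ ^ 2)) :=
      (hasDerivAt_iff_tendsto_slope.1 hF₂d).comp hgt
    have hslope₁ : Tendsto (slope F₁ x) (nhdsWithin x {x}ᶜ) (nhds (‖φ₁ z₀ x‖ ^ 2)) :=
      hasDerivAt_iff_tendsto_slope.1 hF₁d
    have hdiv := hslope₁.div hslope₂ hd₂.ne'
    refine hdiv.congr' ?_
    have hs₂pos : ∀ᶠ y in nhdsWithin x {x}ᶜ, 0 < slope F₂ (g x) (g y) :=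
      hslope₂.eventually (eventually_gt_nhds hd₂)
    filter_upwards [hmem, hne, hgne, hs₂pos] with y hy hyx hgy hsl
    have hy' : y - x ≠ 0 := sub_ne_zero.2 hyx
    have hg' : g y - g x ≠ 0 := sub_ne_zero.2 hgy
    have hF₁ne : F₁ y - F₁ x ≠ 0 := by
      have : slope F₂ (g x) (g y) = (F₁ y - F₁ x) / (g y - g x) := by
        rw [slope_def_field, hid y hy, hid x hx]
      intro h0
      rw [this, h0, zero_div] at hsl
      exact lt_irrefl 0 hsl
    simp only [Pi.div_apply]
    rw [slope_def_field, slope_def_field, slope_def_field, hid y hy, hid x hx]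
    field_simp
  refine ⟨fun x => ‖φ₁ z₀ x‖ ^ 2 / ‖φ₂ z₀ (g x)‖ ^ 2, ?_, hgd, ?_⟩
  · have hgcont : ContinuousOn g (Ioo a₁ b₁) :=
      fun x hx => (hgc x hx).continuousWithinAt
    exact ((hic₁ z₀ hz₀).div ((hic₂ z₀ hz₀).comp hgcont hmap)
      (fun x hx => (hpos₂ z₀ hz₀ _ (hmap x hx)).ne'))
  · intro z hz x hx
    have h1 : HasDerivAt (fun u => ∫ t in Ioo a₁ u, ‖φ₁ z t‖ ^ 2) (‖φ₁ z x‖ ^ 2) x :=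
      hF z hz x hx
    have h2 : HasDerivAt (fun u => ∫ t in Ioo a₂ u, ‖φ₂ z t‖ ^ 2)
        (‖φ₂ z (g x)‖ ^ 2) (g x) := hG z hz (g x) (hmap x hx)
    have h3 : HasDerivAt (fun y => ∫ t in Ioo a₂ (g y), ‖φ₂ z t‖ ^ 2)
        (‖φ₂ z (g x)‖ ^ 2 * (‖φ₁ z₀ x‖ ^ 2 / ‖φ₂ z₀ (g x)‖ ^ 2)) x :=
      h2.comp x (hgd x hx)
    have h4 : (fun u => ∫ t in Ioo a₁ u, ‖φ₁ z t‖ ^ 2)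
        =ᶠ[nhds x] (fun y => ∫ t in Ioo a₂ (g y), ‖φ₂ z t‖ ^ 2) := by
      filter_upwards [Ioo_mem_nhds hx.1 hx.2] with y hy
      exact hident z hz y hy
    have h5 : HasDerivAt (fun u => ∫ t in Ioo a₁ u, ‖φ₁ z t‖ ^ 2)
        (‖φ₂ z (g x)‖ ^ 2 * (‖φ₁ z₀ x‖ ^ 2 / ‖φ₂ z₀ (g x)‖ ^ 2)) x :=
      h3.congr_of_eventuallyEq h4
    have h6 := h1.unique h5
    rw [h6]; ring
end
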